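/- For positive integers m, n: ∑_{j=0}^{n} A_{-λ}(n,j) binom(m+j+1, n+1) = (β_{n+1,λ}(m+1) - β_{n+1,λ})/(n+1). -/

import Mathlib

open Finset PowerSeries

/-- Degenerate falling factorial `(x)_{n,λ} = x(x-λ)⋯(x-(n-1)λ)`. -/
noncomputable def dfall (l x : ℝ) (n : ℕ) : ℝ := ∏ i ∈ Finset.range n, (x - i * l)

/-- Degenerate Eulerian number `A_λ(n,k) = ∑_{i=0}^k C(n+1,i)(-1)^i (k-i+1)_{n,λ}`. -/
noncomputable def degEulerianNum (l : ℝ) (n k : ℕ) : ℝ :=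
  ∑ i ∈ Finset.range (k+1), ((n+1).choose i : ℝ) * (-1)^i * dfall l ((k : ℝ) - i + 1) n

/-- Degenerate Eulerian polynomial `A_{n,λ}(x) = ∑_{k=0}^n A_λ(n,k) x^k`. -/
noncomputable def degEulerianPoly (l : ℝ) (n : ℕ) (x : ℝ) : ℝ :=
  ∑ k ∈ Finset.range (n+1), degEulerianNum l n k * x^k

/-- Generalized binomial coefficient `binom(y,m) = y(y-1)⋯(y-m+1)/m!`. -/
noncomputable def genBinom (y : ℝ) (m : ℕ) : ℝ :=
  (∏ i ∈ Finset.range m, (y - i)) / m.factorial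

/-- Degenerate exponential `e_λ^x(t) = ∑_k (x)_{k,λ} t^k/k!` as a formal power series. -/
noncomputable def degExp (l x : ℝ) : PowerSeries ℝ :=
  PowerSeries.mk fun k => dfall l x k / k.factorial

/-- Degenerate Stirling number of the second kind (explicit formula). -/
noncomputable def degStirling2 (l : ℝ) (n k : ℕ) : ℝ :=
  (-1)^k / k.factorial * ∑ j ∈ Finset.range (k+1), (-1)^j * (k.choose j : ℝ) * dfall l j n

/- ===================== auxiliary lemmas ===================== -/

lemma fd_pow : ∀ (n : ℕ), ∀ k ≤ n, ∑ i ∈ range (n+2), (-1:ℝ)^i * ((n+1).choose i : ℝ) * (i:ℝ)^k = 0 := by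
  intro n
  induction n with
  | zero =>
    intro k hk
    interval_cases k
    simp [sum_range_succ]
  | succ n ih =>
    intro k hk
    have key : ∑ i ∈ range (n+3), (-1:ℝ)^i * ((n+2).choose i : ℝ) * (i:ℝ)^k
        = (∑ i ∈ range (n+2), (-1:ℝ)^i * ((n+1).choose i : ℝ) * (i:ℝ)^k)
          + ∑ i ∈ range (n+2), (-1:ℝ)^(i+1) * ((n+1).choose i : ℝ) * ((i:ℝ)+1)^k := by
      rw [Finset.sum_range_succ' _ (n+2)]
      have h1 : ∀ i ∈ range (n+2), (-1:ℝ)^(i+1) * ((n+2).choose (i+1) : ℝ) * ((i+1:ℕ):ℝ)^k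
          = ((-1:ℝ)^(i+1) * ((n+1).choose (i+1) : ℝ) * ((i:ℝ)+1)^k)
            + ((-1:ℝ)^(i+1) * ((n+1).choose i : ℝ) * ((i:ℝ)+1)^k) := by
        intro i _
        rw [Nat.choose_succ_succ (n+1) i]
        push_cast
        ring
      rw [Finset.sum_congr rfl h1, Finset.sum_add_distrib]
      have h2 : ∑ i ∈ range (n+2), (-1:ℝ)^i * ((n+1).choose i : ℝ) * (i:ℝ)^k
          = (∑ i ∈ range (n+2), (-1:ℝ)^(i+1) * ((n+1).choose (i+1) : ℝ) * ((i+1:ℕ):ℝ)^k)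
            + (-1:ℝ)^0 * ((n+1).choose 0 : ℝ) * ((0:ℕ):ℝ)^k := by
        rw [← Finset.sum_range_succ' (fun i => (-1:ℝ)^i * ((n+1).choose i : ℝ) * (i:ℝ)^k) (n+2)]
        conv_rhs => rw [Finset.sum_range_succ]
        rw [Nat.choose_eq_zero_of_lt (by omega : n+1 < n+2)]
        push_cast
        ring
      rw [h2]
      simp only [Nat.choose_zero_right]
      push_cast
      ring
    have expand : ∀ i ∈ range (n+2), (-1:ℝ)^(i+1) * ((n+1).choose i : ℝ) * ((i:ℝ)+1)^k
        = ∑ t ∈ range (k+1), (-((-1:ℝ)^i * ((n+1).choose i : ℝ)) * ((k.choose t : ℝ) * (i:ℝ)^t)) := by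
      intro i _
      have hb : ((i:ℝ)+1)^k = ∑ t ∈ range (k+1), (i:ℝ)^t * 1^(k-t) * (k.choose t : ℝ) := add_pow _ _ _
      rw [hb, Finset.mul_sum]
      exact Finset.sum_congr rfl fun t _ => by ring
    have inner : ∀ t ∈ range (k+1),
        ∑ i ∈ range (n+2), (-((-1:ℝ)^i * ((n+1).choose i : ℝ)) * ((k.choose t : ℝ) * (i:ℝ)^t))
        = -(k.choose t : ℝ) * (∑ i ∈ range (n+2), (-1:ℝ)^i * ((n+1).choose i : ℝ) * (i:ℝ)^t) := by
      intro t _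
      rw [Finset.mul_sum]
      exact Finset.sum_congr rfl fun i _ => by ring
    have htail : ∀ t ∈ range k, -(k.choose t : ℝ) * (∑ i ∈ range (n+2), (-1:ℝ)^i * ((n+1).choose i : ℝ) * (i:ℝ)^t) = 0 := by
      intro t ht
      have ht' := Finset.mem_range.mp ht
      rw [ih t (by omega)]
      ring
    have hneg : ∑ i ∈ range (n+2), (-1:ℝ)^(i+1) * ((n+1).choose i : ℝ) * ((i:ℝ)+1)^k
        = -(∑ i ∈ range (n+2), (-1:ℝ)^i * ((n+1).choose i : ℝ) * (i:ℝ)^k) := by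
      rw [Finset.sum_congr rfl expand, Finset.sum_comm, Finset.sum_congr rfl inner,
        Finset.sum_range_succ, Finset.sum_eq_zero htail]
      simp
    rw [key, hneg]
    ring

lemma fd_dfall (l c : ℝ) (n : ℕ) :
    ∑ i ∈ range (n+2), (-1:ℝ)^i * ((n+1).choose i : ℝ) * dfall l (c - i) n = 0 := by
  set p : Polynomial ℝ := ∏ t ∈ range n, (Polynomial.C (c - t*l) - Polynomial.X) with hp
  have hdeg : p.natDegree ≤ n := by
    refine le_trans (Polynomial.natDegree_prod_le _ _) ?_
    calc ∑ t ∈ range n, (Polynomial.C (c - t*l) - Polynomial.X).natDegree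
        ≤ ∑ t ∈ range n, 1 := by
          refine Finset.sum_le_sum fun t _ => ?_
          refine le_trans (Polynomial.natDegree_sub_le _ _) ?_
          rw [Polynomial.natDegree_C, Polynomial.natDegree_X]
          simp
      _ = n := by simp
  have heval : ∀ y : ℝ, p.eval y = dfall l (c - y) n := by
    intro y
    rw [hp, Polynomial.eval_prod]
    exact Finset.prod_congr rfl fun t _ => by simp [dfall]; ring_nf
  have hexp : ∀ y : ℝ, p.eval y = ∑ k ∈ range (n+1), p.coeff k * y^k := fun y =>
    Polynomial.eval_eq_sum_range' (by omega) y
  have step : ∀ i ∈ range (n+2), (-1:ℝ)^i * ((n+1).choose i : ℝ) * dfall l (c - i) n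
      = ∑ k ∈ range (n+1), p.coeff k * ((-1:ℝ)^i * ((n+1).choose i : ℝ) * (i:ℝ)^k) := by
    intro i _
    rw [← heval, hexp, Finset.mul_sum]
    exact Finset.sum_congr rfl fun k _ => by ring
  rw [Finset.sum_congr rfl step, Finset.sum_comm]
  refine Finset.sum_eq_zero fun k hk => ?_
  have hk' := Finset.mem_range.mp hk
  rw [← Finset.mul_sum, fd_pow n k (by omega), mul_zero]


lemma dfall_succ (l x : ℝ) (n : ℕ) : dfall l x (n+1) = dfall l x n * (x - n*l) :=
  Finset.prod_range_succ _ _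

lemma dfall_zero_left (x : ℝ) (n : ℕ) : dfall 0 x n = x^n := by
  simp [dfall]

lemma dfall_neg (l x : ℝ) (n : ℕ) : dfall (-l) x n = (-1:ℝ)^n * dfall l (-x) n := by
  have hc : ((-1:ℝ))^n = ∏ _i ∈ range n, (-1:ℝ) := by simp
  rw [dfall, dfall, hc, ← Finset.prod_mul_distrib]
  exact Finset.prod_congr rfl fun i _ => by ring

lemma descPochhammer_real_eval_eq_prod (k : ℕ) (r : ℝ) :
    (descPochhammer ℝ k).eval r = ∏ i ∈ range k, (r - i) := by
  induction k with
  | zero => simp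
  | succ k ih => rw [descPochhammer_succ_eval, ih, Finset.prod_range_succ]

lemma dfall_eq_desc (l : ℝ) (hl : l ≠ 0) (z : ℝ) (k : ℕ) :
    dfall l z k = l^k * (descPochhammer ℝ k).eval (z/l) := by
  have hc : l^k = ∏ _i ∈ range k, l := by simp
  rw [descPochhammer_real_eval_eq_prod, dfall, hc, ← Finset.prod_mul_distrib]
  exact Finset.prod_congr rfl fun i _ => by field_simp

lemma smeval_desc (k : ℕ) (r : ℝ) : (descPochhammer ℤ k).smeval r = (descPochhammer ℝ k).eval r := by
  rw [← Polynomial.aeval_eq_smeval, Polynomial.aeval_def, ← Polynomial.eval_map,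
    descPochhammer_map]

lemma dfall_vander (l x y : ℝ) (n : ℕ) :
    dfall l (x+y) n = ∑ ij ∈ antidiagonal n, (n.choose ij.1 : ℝ) * (dfall l x ij.1 * dfall l y ij.2) := by
  rcases eq_or_ne l 0 with rfl | hl
  · simp only [dfall_zero_left]
    rw [Finset.Nat.sum_antidiagonal_eq_sum_range_succ_mk, add_pow]
    refine Finset.sum_congr rfl fun i _ => by ring
  · have key := Ring.descPochhammer_smeval_add (R := ℝ) (r := x/l) (s := y/l) n (Commute.all _ _)
    rw [← add_div] at key
    rw [dfall_eq_desc l hl, ← smeval_desc, key, Finset.mul_sum]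
    refine Finset.sum_congr rfl fun ij hij => ?_
    have hij' : ij.1 + ij.2 = n := by rwa [Finset.HasAntidiagonal.mem_antidiagonal] at hij
    rw [smeval_desc, smeval_desc, dfall_eq_desc l hl x, dfall_eq_desc l hl y]
    rw [← hij', pow_add]
    ring

lemma degExp_mul (l x y : ℝ) : degExp l x * degExp l y = degExp l (x+y) := by
  refine PowerSeries.ext fun k => ?_
  rw [PowerSeries.coeff_mul]
  simp only [degExp, coeff_mk]
  rw [dfall_vander l x y k, Finset.sum_div]
  refine Finset.sum_congr rfl fun ij hij => ?_
  have hij' : ij.1 + ij.2 = k := by rwa [Finset.HasAntidiagonal.mem_antidiagonal] at hij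
  have h1 : (ij.1.factorial : ℝ) ≠ 0 := Nat.cast_ne_zero.mpr (Nat.factorial_ne_zero _)
  have h2 : (ij.2.factorial : ℝ) ≠ 0 := Nat.cast_ne_zero.mpr (Nat.factorial_ne_zero _)
  have h3 : (k.factorial : ℝ) ≠ 0 := Nat.cast_ne_zero.mpr (Nat.factorial_ne_zero _)
  have hch : (k.choose ij.1 : ℝ) = k.factorial / (ij.1.factorial * (k - ij.1).factorial) :=
    Nat.cast_choose ℝ (by omega)
  have hsub : k - ij.1 = ij.2 := by omega
  rw [hsub] at hch
  rw [hch]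
  field_simp

lemma degExp_sub_one_ne (l : ℝ) : degExp l 1 - 1 ≠ 0 := by
  intro h
  have h1 := congrArg (PowerSeries.coeff 1) h
  simp [degExp, coeff_mk, dfall, PowerSeries.coeff_one] at h1

lemma B_rec (l : ℝ) (B : ℝ → ℕ → ℝ)
    (hB : ∀ x : ℝ, (PowerSeries.X : PowerSeries ℝ) * degExp l x =
      (degExp l 1 - 1) * PowerSeries.mk (fun n => B x n / n.factorial))
    (x : ℝ) (k : ℕ) :
    B (x+1) (k+1) - B x (k+1) = ((k:ℝ)+1) * dfall l x k := by
  have hEx : degExp l (x+1) = degExp l 1 * degExp l x := by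
    rw [degExp_mul, add_comm]
  have key : (degExp l 1 - 1) * (PowerSeries.mk (fun n => B (x+1) n / n.factorial)
      - PowerSeries.mk (fun n => B x n / n.factorial))
      = (degExp l 1 - 1) * (PowerSeries.X * degExp l x) := by
    rw [mul_sub, ← hB (x+1), ← hB x, hEx]
    ring
  have hcan := mul_left_cancel₀ (degExp_sub_one_ne l) key
  have hc := congrArg (PowerSeries.coeff (k+1)) hcan
  rw [map_sub, PowerSeries.coeff_succ_X_mul] at hc
  simp only [coeff_mk, degExp] at hc
  have hfk : (k.factorial : ℝ) ≠ 0 := Nat.cast_ne_zero.mpr (Nat.factorial_ne_zero _)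
  have hfk1 : ((k+1).factorial : ℝ) ≠ 0 := Nat.cast_ne_zero.mpr (Nat.factorial_ne_zero _)
  have hfac : ((k+1).factorial : ℝ) = ((k:ℝ)+1) * k.factorial := by
    rw [Nat.factorial_succ]; push_cast; ring
  field_simp at hc
  rw [hfac] at hc
  have h2 : (B (x+1) (k+1) - B x (k+1)) * (k.factorial:ℝ)
      = (((k:ℝ)+1) * dfall l x k) * k.factorial := by rw [hc]; ring
  exact mul_right_cancel₀ hfk h2

noncomputable def aP (l : ℝ) (n r : ℕ) : ℝ :=
  ∑ i ∈ range (r+1), (-1:ℝ)^i * ((n+1).choose i : ℝ) * dfall l ((r:ℝ) - i) n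

lemma aP_zero (l : ℝ) (n r : ℕ) (hr : n < r) : aP l n r = 0 := by
  rw [aP, ← fd_dfall l (r:ℝ) n]
  symm
  refine Finset.sum_subset (by intro i hi; simp at hi ⊢; omega) ?_
  intro i hi hni
  have h1 : n + 2 ≤ i := by simp at hni; omega
  rw [Nat.choose_eq_zero_of_lt (by omega)]
  simp

lemma aP_eq (l : ℝ) (n r : ℕ) (hr : r ≤ n) :
    degEulerianNum (-l) n (n-r) = aP l n r := by
  have hfd := fd_dfall l (r:ℝ) n
  rw [← Finset.sum_range_add_sum_Ico _ (show r+1 ≤ n+2 by omega)] at hfd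
  have hsplit : aP l n r = -∑ i ∈ Ico (r+1) (n+2), (-1:ℝ)^i * ((n+1).choose i : ℝ) * dfall l ((r:ℝ) - i) n := by
    rw [aP]; linarith [hfd]
  rw [hsplit]
  rw [degEulerianNum]
  rw [← Finset.sum_neg_distrib]
  refine Finset.sum_nbij' (fun i => n+1-i) (fun i => n+1-i) ?_ ?_ ?_ ?_ ?_
  · intro i hi
    simp only [Finset.mem_range] at hi
    simp only [Finset.mem_Ico]
    omega
  · intro i hi
    simp only [Finset.mem_Ico] at hi
    simp only [Finset.mem_range]
    omega
  · intro i hi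
    simp only [Finset.mem_range] at hi
    show n+1-(n+1-i) = i
    omega
  · intro i hi
    simp only [Finset.mem_Ico] at hi
    show n+1-(n+1-i) = i
    omega
  · intro i hi
    simp only [Finset.mem_range] at hi
    have hi' : i ≤ n - r := by omega
    have hch : (n+1).choose (n+1-i) = (n+1).choose i := Nat.choose_symm (by omega)
    have hc1 : ((n-r:ℕ):ℝ) = (n:ℝ) - r := by
      have : r ≤ n := hr
      push_cast [this]; ring
    have hc2 : ((n+1-i:ℕ):ℝ) = (n:ℝ) + 1 - i := by push_cast [show i ≤ n+1 by omega]; ring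
    have hsign : ((-1:ℝ))^(n+1-i) * ((-1:ℝ))^i = ((-1:ℝ))^(n+1) := by
      rw [← pow_add]; congr 1; omega
    rw [dfall_neg]
    rw [hch, hc1, hc2]
    have hd : dfall l (-((n:ℝ) - r - i + 1)) n = dfall l ((r:ℝ) - ((n:ℝ)+1-i)) n := by
      congr 1; ring
    rw [hd]
    have hs2 : ((-1:ℝ))^(n+1-i) = ((-1:ℝ))^(n+1) * ((-1:ℝ))^i := by
      have h := hsign
      have hii : ((-1:ℝ))^i * ((-1:ℝ))^i = 1 := by
        rw [← pow_add]; simp [pow_add, ← two_mul, pow_mul]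
      calc ((-1:ℝ))^(n+1-i) = ((-1:ℝ))^(n+1-i) * (((-1:ℝ))^i * ((-1:ℝ))^i) := by rw [hii]; ring
        _ = (((-1:ℝ))^(n+1-i) * ((-1:ℝ))^i) * ((-1:ℝ))^i := by ring
        _ = ((-1:ℝ))^(n+1) * ((-1:ℝ))^i := by rw [hsign]
    rw [hs2]
    rw [pow_succ]
    ring

lemma coeff_one_sub_X_pow (k i : ℕ) :
    (PowerSeries.coeff i) ((1 - PowerSeries.X)^k) = (-1:ℝ)^i * (k.choose i : ℝ) := by
  have hexp : ((1:PowerSeries ℝ) - PowerSeries.X)^k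
      = ∑ m ∈ range (k+1), ((-1:ℝ)^m * (k.choose m : ℝ)) • (PowerSeries.X:PowerSeries ℝ)^m := by
    rw [sub_eq_add_neg, add_comm, add_pow]
    refine Finset.sum_congr rfl fun m hm => ?_
    rw [one_pow, neg_pow, PowerSeries.smul_eq_C_mul]
    simp only [map_mul, map_pow, map_neg, map_one, map_natCast]
    ring
  rw [hexp, map_sum]
  simp only [LinearMap.map_smul, PowerSeries.coeff_X_pow, smul_eq_mul]
  rw [Finset.sum_eq_single i]
  · by_cases hik : i ≤ k
    · simp
    · simp [Nat.choose_eq_zero_of_lt (by omega : k < i)]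
  · intro m _ hmi
    simp [Ne.symm hmi]
  · intro hi
    simp at hi
    simp [Nat.choose_eq_zero_of_lt (by omega : k < i)]

lemma geom_inv (k : ℕ) :
    ((1 - PowerSeries.X)^(k+1) : PowerSeries ℝ) * PowerSeries.mk (fun t => ((t+k).choose k : ℝ)) = 1 := by
  induction k with
  | zero =>
    refine PowerSeries.ext fun n => ?_
    rw [zero_add, pow_one, sub_mul, one_mul, map_sub]
    cases n with
    | zero => simp
    | succ n => simp [PowerSeries.coeff_succ_X_mul, PowerSeries.coeff_one]
  | succ k ih =>
    have hstep : ((1:PowerSeries ℝ) - PowerSeries.X) * PowerSeries.mk (fun t => ((t+(k+1)).choose (k+1) : ℝ))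
        = PowerSeries.mk (fun t => ((t+k).choose k : ℝ)) := by
      refine PowerSeries.ext fun n => ?_
      rw [sub_mul, one_mul, map_sub]
      cases n with
      | zero => simp
      | succ n =>
        rw [PowerSeries.coeff_succ_X_mul]
        simp only [coeff_mk]
        have : (n+1+(k+1)).choose (k+1) = (n+k+1).choose k + (n+k+1).choose (k+1) := by
          rw [show n+1+(k+1) = (n+k+1)+1 by omega]
          exact Nat.choose_succ_succ (n+k+1) k
        rw [this, show n+(k+1) = n+k+1 by omega, show n+1+k = n+k+1 by omega]
        push_cast
        ring
    calc ((1 - PowerSeries.X)^(k+2) : PowerSeries ℝ) * PowerSeries.mk (fun t => ((t+(k+1)).choose (k+1) : ℝ))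
        = ((1 - PowerSeries.X)^(k+1) : PowerSeries ℝ) *
          (((1:PowerSeries ℝ) - PowerSeries.X) * PowerSeries.mk (fun t => ((t+(k+1)).choose (k+1) : ℝ))) := by
          ring
      _ = 1 := by rw [hstep, ih]

lemma conv_eq (l : ℝ) (n K : ℕ) :
    dfall l (K:ℝ) n = ∑ r ∈ range (K+1), aP l n r * (((K-r)+n).choose n : ℝ) := by
  set F : PowerSeries ℝ := PowerSeries.mk (fun s => dfall l (s:ℝ) n) with hF
  set H : PowerSeries ℝ := PowerSeries.mk (fun t => ((t+n).choose n : ℝ)) with hH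
  set G : PowerSeries ℝ := (1 - PowerSeries.X)^(n+1) * F with hG
  have hGc : ∀ r, (PowerSeries.coeff r) G = aP l n r := by
    intro r
    rw [hG, PowerSeries.coeff_mul, Finset.Nat.sum_antidiagonal_eq_sum_range_succ_mk, aP]
    refine Finset.sum_congr rfl fun i hi => ?_
    rw [coeff_one_sub_X_pow, coeff_mk]
    have hir : i ≤ r := by simp at hi; omega
    have : ((r-i:ℕ):ℝ) = (r:ℝ) - i := by push_cast [hir]; ring
    rw [this]
  have hFGH : F = G * H := by
    calc F = F * (((1 - PowerSeries.X)^(n+1) : PowerSeries ℝ) * H) := by rw [geom_inv]; ring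
      _ = G * H := by rw [hG]; ring
  have hc := congrArg (PowerSeries.coeff K) hFGH
  rw [PowerSeries.coeff_mul, Finset.Nat.sum_antidiagonal_eq_sum_range_succ_mk, hF, hH] at hc
  simp only [coeff_mk, hGc, Nat.succ_eq_add_one] at hc
  exact hc

lemma worpitzky (l : ℝ) (n K : ℕ) :
    ∑ j ∈ range (n+1), degEulerianNum (-l) n j * ((K+j).choose n : ℝ) = dfall l (K:ℝ) n := by
  have hrefl := Finset.sum_range_reflect
    (fun j => degEulerianNum (-l) n j * ((K+j).choose n : ℝ)) (n+1)
  rw [← hrefl]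
  have hterm : ∀ r ∈ range (n+1),
      degEulerianNum (-l) n (n+1-1-r) * ((K+(n+1-1-r)).choose n : ℝ)
      = aP l n r * ((K+n-r).choose n : ℝ) := by
    intro r hr
    have hr' : r ≤ n := by simp at hr; omega
    have e1 : n+1-1-r = n-r := by omega
    have e2 : K+(n-r) = K+n-r := by omega
    rw [e1, aP_eq l n r hr', e2]
  rw [Finset.sum_congr rfl hterm, conv_eq l n K]
  have hterm2 : ∀ r ∈ range (K+1),
      aP l n r * (((K-r)+n).choose n : ℝ) = aP l n r * ((K+n-r).choose n : ℝ) := by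
    intro r hr
    have hr' : r ≤ K := by simp at hr; omega
    have : (K-r)+n = K+n-r := by omega
    rw [this]
  rw [Finset.sum_congr rfl hterm2]
  set M := max n K with hM
  have h1 : ∑ r ∈ range (n+1), aP l n r * ((K+n-r).choose n : ℝ)
      = ∑ r ∈ range (M+1), aP l n r * ((K+n-r).choose n : ℝ) := by
    refine Finset.sum_subset (by intro x hx; simp only [Finset.mem_range, hM] at *; omega) ?_
    intro r hr hnr
    simp only [Finset.mem_range] at hr hnr
    rw [aP_zero l n r (by omega)]
    ring
  have h2 : ∑ r ∈ range (K+1), aP l n r * ((K+n-r).choose n : ℝ)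
      = ∑ r ∈ range (M+1), aP l n r * ((K+n-r).choose n : ℝ) := by
    refine Finset.sum_subset (by intro x hx; simp only [Finset.mem_range, hM] at *; omega) ?_
    intro r hr hnr
    simp only [Finset.mem_range] at hr hnr
    have hrn : r ≤ n := by omega
    have : K+n-r < n := by omega
    rw [Nat.choose_eq_zero_of_lt this]
    simp
  rw [h2, ← h1]

lemma hockey (m n j : ℕ) (hj : j ≤ n) :
    ((m+j+1).choose (n+1) : ℕ) = ∑ k ∈ range (m+1), (k+j).choose n := by
  have h1 : ∑ k ∈ range (m+1), (k+j).choose n = ∑ i ∈ Icc j (m+j), i.choose n := by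
    refine Finset.sum_nbij' (fun k => k+j) (fun i => i-j) ?_ ?_ ?_ ?_ ?_
    · intro k hk; simp only [Finset.mem_range] at hk; simp only [Finset.mem_Icc]; omega
    · intro i hi; simp only [Finset.mem_Icc] at hi; simp only [Finset.mem_range]; omega
    · intro k hk; simp only [Finset.mem_range] at hk; show k+j-j = k; omega
    · intro i hi; simp only [Finset.mem_Icc] at hi; show i-j+j = i; omega
    · intro k hk; rfl
  have h2 : ∑ i ∈ Icc n (m+j), i.choose n = ∑ i ∈ Icc j (m+j), i.choose n := by
    refine Finset.sum_subset (Finset.Icc_subset_Icc hj le_rfl) ?_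
    intro i hi hni
    simp only [Finset.mem_Icc] at hi hni
    exact Nat.choose_eq_zero_of_lt (by omega)
  rw [h1, ← h2, Nat.sum_Icc_choose]

/-- with `B x n = β_{n,λ}(x)` the degenerate Bernoulli polynomials, for
`m, n ≥ 1`: `∑_{j=0}^n A_{-λ}(n,j) binom(m+j+1, n+1) = (β_{n+1,λ}(m+1) - β_{n+1,λ})/(n+1)`. -/
theorem stmt14 (l : ℝ) (B : ℝ → ℕ → ℝ)
    (hB : ∀ x : ℝ, (PowerSeries.X : PowerSeries ℝ) * degExp l x =
      (degExp l 1 - 1) * PowerSeries.mk (fun n => B x n / n.factorial))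
    (m n : ℕ) (hm : 1 ≤ m) (hn : 1 ≤ n) :
    ∑ j ∈ Finset.range (n + 1), degEulerianNum (-l) n j * ((m + j + 1).choose (n + 1) : ℝ) =
      (B ((m : ℝ) + 1) (n + 1) - B 0 (n + 1)) / (n + 1) := by
  -- LHS computation
  have hL : ∑ j ∈ Finset.range (n + 1), degEulerianNum (-l) n j * ((m + j + 1).choose (n + 1) : ℝ)
      = ∑ k ∈ range (m+1), dfall l (k:ℝ) n := by
    have hstep : ∀ j ∈ range (n+1),
        degEulerianNum (-l) n j * ((m + j + 1).choose (n + 1) : ℝ)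
        = ∑ k ∈ range (m+1), degEulerianNum (-l) n j * ((k+j).choose n : ℝ) := by
      intro j hj
      have hj' : j ≤ n := by simp at hj; omega
      rw [hockey m n j hj']
      push_cast
      rw [Finset.mul_sum]
    rw [Finset.sum_congr rfl hstep, Finset.sum_comm]
    exact Finset.sum_congr rfl fun k _ => worpitzky l n k
  rw [hL]
  -- RHS computation: telescoping
  have htel := Finset.sum_range_sub (fun k => B (k:ℝ) (n+1)) (m+1)
  have hterm : ∀ k ∈ range (m+1),
      B ((k+1:ℕ):ℝ) (n+1) - B ((k:ℕ):ℝ) (n+1) = ((n:ℝ)+1) * dfall l (k:ℝ) n := by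
    intro k _
    have := B_rec l B hB (k:ℝ) n
    rw [← this]
    push_cast
    ring
  rw [Finset.sum_congr rfl hterm] at htel
  rw [← Finset.mul_sum] at htel
  have hcast1 : ((m+1:ℕ):ℝ) = (m:ℝ)+1 := by push_cast; ring
  have hcast0 : ((0:ℕ):ℝ) = (0:ℝ) := by norm_num
  rw [hcast1, hcast0] at htel
  rw [← htel]
  have hne : ((n:ℝ)+1) ≠ 0 := by positivity
  field_simp
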